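/- (Theorem 1, 𝒜-relation) For every N ≥ 2 and every u ∈ ℂ: Q^(N) ∘ 𝒜^(N)(u) − d(u)² · 𝒜^(N−1)(u) ∘ Q^(N) = (−1)^N c(u) d(u) · (E⁺ ⊗ ℬ^(N−1)(u)) as linear maps V^⊗N → V^⊗(N−1). -/

import Mathlib

noncomputable section
open Complex Matrix

/-- Spin configurations of a chain of `N` sites: `true` encodes `v₊`, `false` encodes `v₋`.
The site with label `i ∈ {1,…,N}` corresponds to the index `i-1 : Fin N`
(so the leftmost site `N` is the index `N-1`). -/
abbrev Conf (N : ℕ) := Fin N → Bool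

/-- The combinatorial-point parameter `η = 2πi/3`. -/
def ηc : ℂ := 2 * (Real.pi : ℂ) * Complex.I / 3

/-- `a(u) = sinh(u+η)/sinh η`. -/
def aF (u : ℂ) : ℂ := Complex.sinh (u + ηc) / Complex.sinh ηc
/-- `b(u) = sinh(u)/sinh η`. -/
def bF (u : ℂ) : ℂ := Complex.sinh u / Complex.sinh ηc
/-- `c(u) = 1`. -/
def cF (_ : ℂ) : ℂ := 1
/-- `d(u) = sinh(u-η)/sinh η`. -/
def dF (u : ℂ) : ℂ := Complex.sinh (u - ηc) / Complex.sinh ηc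
/-- The R-matrix `R(u)` on `V⊗V` in the ordered basis `(v₊⊗v₊, v₊⊗v₋, v₋⊗v₊, v₋⊗v₋)`:
`[[a,0,0,0],[0,b,c,0],[0,c,b,0],[0,0,0,a]]`. -/
def Rm (u : ℂ) : Matrix (Bool × Bool) (Bool × Bool) ℂ :=
  Matrix.of fun o i =>
    if o = i then (if o.1 = o.2 then aF u else bF u)
    else if o.1 = i.2 ∧ o.2 = i.1 ∧ o.1 ≠ o.2 then cF u
    else 0

/-- The boundary K-matrix `K⁻(u) = diag(d(u), -a(u))` in the basis `(v₊, v₋)`. -/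
def Km (u : ℂ) : Matrix Bool Bool ℂ :=
  Matrix.of fun o i => if o = i then (if o then dF u else -aF u) else 0

/-- `R₀ᵢ(u)`: the matrix `R(u)` applied to `V₀ ⊗ Vᵢ` (auxiliary space first), identity
elsewhere, on `V₀ ⊗ V^⊗N`; here the site with label `i` is the index `i-1`. -/
def R0i (N : ℕ) (u : ℂ) (i : Fin N) :
    Matrix (Bool × Conf N) (Bool × Conf N) ℂ :=
  Matrix.of fun x y =>
    if ∀ j, j ≠ i → x.2 j = y.2 j then Rm u (x.1, x.2 i) (y.1, y.2 i) else 0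

/-- `Rᵢ₀(u)`: the matrix `R(u)` applied to `Vᵢ ⊗ V₀` (auxiliary space second), identity
elsewhere, on `V₀ ⊗ V^⊗N`. -/
def Ri0 (N : ℕ) (u : ℂ) (i : Fin N) :
    Matrix (Bool × Conf N) (Bool × Conf N) ℂ :=
  Matrix.of fun x y =>
    if ∀ j, j ≠ i → x.2 j = y.2 j then Rm u (x.2 i, x.1) (y.2 i, y.1) else 0

/-- `T^(N)(u) = R₀₁(u) R₀₂(u) ⋯ R₀N(u)`. -/
def Tmono (N : ℕ) (u : ℂ) : Matrix (Bool × Conf N) (Bool × Conf N) ℂ :=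
  (List.ofFn fun i : Fin N => R0i N u i).prod

/-- `T̄^(N)(u) = R_{N0}(u) ⋯ R_{20}(u) R_{10}(u)`. -/
def Tbar (N : ℕ) (u : ℂ) : Matrix (Bool × Conf N) (Bool × Conf N) ℂ :=
  (List.ofFn fun i : Fin N => Ri0 N u i).reverse.prod

/-- `K₀⁻(u)`: the matrix `K⁻(u)` acting on the auxiliary space `V₀`, identity on `V^⊗N`. -/
def K0m (N : ℕ) (u : ℂ) : Matrix (Bool × Conf N) (Bool × Conf N) ℂ :=
  Matrix.of fun x y => if x.2 = y.2 then Km u x.1 y.1 else 0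

/-- The double-row monodromy matrix `U^(N)(u) = T̄^(N)(u) K₀⁻(u) T^(N)(u)`. -/
def Umono (N : ℕ) (u : ℂ) : Matrix (Bool × Conf N) (Bool × Conf N) ℂ :=
  Tbar N u * K0m N u * Tmono N u

/-- `𝒜^(N)(u)`: the `(v₊, v₊)` auxiliary-space block of `U^(N)(u)`. -/
def Aop (N : ℕ) (u : ℂ) : Matrix (Conf N) (Conf N) ℂ :=
  Matrix.of fun s t => Umono N u (true, s) (true, t)
/-- `ℬ^(N)(u)`: the `(v₊, v₋)` auxiliary-space block of `U^(N)(u)`. -/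
def Bop (N : ℕ) (u : ℂ) : Matrix (Conf N) (Conf N) ℂ :=
  Matrix.of fun s t => Umono N u (true, s) (false, t)
/-- `𝒞^(N)(u)`: the `(v₋, v₊)` auxiliary-space block of `U^(N)(u)`. -/
def Cop (N : ℕ) (u : ℂ) : Matrix (Conf N) (Conf N) ℂ :=
  Matrix.of fun s t => Umono N u (false, s) (true, t)
/-- `𝒟^(N)(u)`: the `(v₋, v₋)` auxiliary-space block of `U^(N)(u)`. -/
def Dop (N : ℕ) (u : ℂ) : Matrix (Conf N) (Conf N) ℂ :=
  Matrix.of fun s t => Umono N u (false, s) (false, t)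

/-- The transfer matrix
`t^(N)(u) = (sinh u / sinh η) 𝒜^(N)(u) - (sinh(u+2η)/sinh η) 𝒟^(N)(u)`. -/
def tOp (N : ℕ) (u : ℂ) : Matrix (Conf N) (Conf N) ℂ :=
  (Complex.sinh u / Complex.sinh ηc) • Aop N u
    - (Complex.sinh (u + 2 * ηc) / Complex.sinh ηc) • Dop N u

/-- The pseudovacuum `Ω^(N) = v₊ ⊗ ⋯ ⊗ v₊`. -/
def Omega (N : ℕ) : Conf N → ℂ := fun s => if ∀ j, s j = true then 1 else 0

/-- `E^ε ⊗ X : V^⊗(n+2) → V^⊗(n+1)`: the linear functional `E^ε : V → ℂ`, `v_ε ↦ 1`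
(zero on the other basis vector), applied to the leftmost site `N = n+2`, tensored with
the operator `X` on the remaining sites `n+1,…,1`.  Here `e = true` encodes `ε = +`. -/
def Etens (n : ℕ) (e : Bool) (X : Matrix (Conf (n + 1)) (Conf (n + 1)) ℂ) :
    Matrix (Conf (n + 1)) (Conf (n + 2)) ℂ :=
  Matrix.of fun o i =>
    (if i (Fin.last (n + 1)) = e then 1 else 0) * X o (fun j => i (Fin.castSucc j))

/-- `F ⊗ X` : the one-site operator `F` applied to the leftmost site `N+1` of a chain of
`N+1` sites, tensored with the operator `X` on the remaining sites `N,…,1`. -/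
def siteTens (N : ℕ) (F : Matrix Bool Bool ℂ) (X : Matrix (Conf N) (Conf N) ℂ) :
    Matrix (Conf (N + 1)) (Conf (N + 1)) ℂ :=
  Matrix.of fun o i =>
    F (o (Fin.last N)) (i (Fin.last N)) * X (fun j => o (Fin.castSucc j)) (fun j => i (Fin.castSucc j))

/-- `E^ε_{ε'} : V → V` sends `v_ε ↦ v_{ε'}` and the other basis vector to `0`
(`true` encodes `+`). -/
def Eop (e e' : Bool) : Matrix Bool Bool ℂ :=
  Matrix.of fun o i => if i = e ∧ o = e' then 1 else 0
/-- The local SUSY generator `q_{i,i+1}` (with `i = k+1`) on a chain of `n+2` sites: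
it applies `q : V⊗V → V`, `q(v₊⊗v₊) = v₋` (zero on the other basis vectors), to the
adjacent sites `i, i+1` (merging them into the single site `i` of the output chain of
`n+1` sites) and the identity to all other sites. -/
def qMerge (n : ℕ) (k : Fin (n + 1)) : Matrix (Conf (n + 1)) (Conf (n + 2)) ℂ :=
  Matrix.of fun o i =>
    if i (Fin.castSucc k) = true ∧ i (Fin.succ k) = true ∧ o k = false ∧
        (∀ j : Fin (n + 1),
          ((j : ℕ) < (k : ℕ) → o j = i (Fin.castSucc j)) ∧
          ((k : ℕ) < (j : ℕ) → o j = i (Fin.succ j)))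
    then 1 else 0

/-- The SUSY operator `Q^(N)` for `N = n+2`:
`Q^(N) = ∑_{i=1}^{N-1} (-1)^{i+1} q_{i,i+1} : V^⊗N → V^⊗(N-1)`. -/
def Qop (n : ℕ) : Matrix (Conf (n + 1)) (Conf (n + 2)) ℂ :=
  ∑ k : Fin (n + 1), ((-1 : ℂ) ^ (k : ℕ)) • qMerge n k

/-- The local operator `q†_i` (with `i = k+1`) on a chain of `n+1` sites: it applies
`q† : V → V⊗V`, `q†(v₋) = v₊⊗v₊`, `q†(v₊) = 0`, to site `i` (splitting it into the two
adjacent sites `i, i+1` of the output chain of `n+2` sites) and the identity elsewhere. -/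
def qSplit (n : ℕ) (k : Fin (n + 1)) : Matrix (Conf (n + 2)) (Conf (n + 1)) ℂ :=
  Matrix.of fun o i =>
    if o (Fin.castSucc k) = true ∧ o (Fin.succ k) = true ∧ i k = false ∧
        (∀ j : Fin (n + 1),
          ((j : ℕ) < (k : ℕ) → i j = o (Fin.castSucc j)) ∧
          ((k : ℕ) < (j : ℕ) → i j = o (Fin.succ j)))
    then 1 else 0

/-- The adjoint SUSY operator `Q^(N)†` for `N = n+2`:
`Q^(N)† = ∑_{i=1}^{N-1} (-1)^{i+1} q†_i : V^⊗(N-1) → V^⊗N`. -/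
def Qdag (n : ℕ) : Matrix (Conf (n + 2)) (Conf (n + 1)) ℂ :=
  ∑ k : Fin (n + 1), ((-1 : ℂ) ^ (k : ℕ)) • qSplit n k
namespace XXZ

def dl (e : Bool) : Bool → ℂ := fun b => if b = e then 1 else 0

def rT {m m' : ℕ} (F : Matrix Bool Bool ℂ) (X : Matrix (Conf m) (Conf m') ℂ) :
    Matrix (Conf (m + 1)) (Conf (m' + 1)) ℂ :=
  Matrix.of fun o i =>
    F (o (Fin.last m)) (i (Fin.last m')) *
      X (fun j => o j.castSucc) (fun j => i j.castSucc)

def dT {m m' : ℕ} (v : Bool → ℂ) (X : Matrix (Conf m) (Conf m') ℂ) :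
    Matrix (Conf m) (Conf (m' + 1)) ℂ :=
  Matrix.of fun o i => v (i (Fin.last m')) * X o (fun j => i j.castSucc)

/-- Split a sum over configurations of `k+1` sites into the last site and the rest. -/
lemma sum_conf_succ {M : Type*} [AddCommMonoid M] {k : ℕ} (f : Conf (k + 1) → M) :
    ∑ s : Conf (k + 1), f s = ∑ t : Conf k, ∑ b : Bool, f (Fin.snoc t b) := by
  classical
  have := Fintype.sum_equiv (Fin.snocEquiv (fun _ : Fin (k + 1) => Bool))
    (fun p => f (Fin.snoc p.2 p.1)) f (fun p => rfl)
  rw [← this, Fintype.sum_prod_type, Finset.sum_comm]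

end XXZ
namespace XXZ

lemma rT_mul {m k l : ℕ} (F G : Matrix Bool Bool ℂ) (X : Matrix (Conf m) (Conf k) ℂ)
    (Y : Matrix (Conf k) (Conf l) ℂ) :
    rT F X * rT G Y = rT (F * G) (X * Y) := by
  ext o i
  simp only [rT, Matrix.mul_apply, Matrix.of_apply]
  rw [sum_conf_succ (fun j => (F (o (Fin.last m)) (j (Fin.last k)) *
      X (fun a => o a.castSucc) (fun a => j a.castSucc)) *
      (G (j (Fin.last k)) (i (Fin.last l)) * Y (fun a => j a.castSucc) (fun a => i a.castSucc)))]
  simp only [Fin.snoc_last, Fin.snoc_castSucc]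
  rw [Finset.sum_comm, Finset.sum_mul_sum]
  refine Finset.sum_congr rfl fun b _ => Finset.sum_congr rfl fun t _ => by ring

lemma mul_dT {a k l : ℕ} (P : Matrix (Conf a) (Conf k) ℂ) (v : Bool → ℂ)
    (Z : Matrix (Conf k) (Conf l) ℂ) :
    P * dT v Z = dT v (P * Z) := by
  ext o i
  simp only [dT, Matrix.mul_apply, Matrix.of_apply, Finset.mul_sum]
  exact Finset.sum_congr rfl fun t _ => by ring

lemma dT_mul_rT {a k l : ℕ} (v : Bool → ℂ) (Z : Matrix (Conf a) (Conf k) ℂ)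
    (G : Matrix Bool Bool ℂ) (Y : Matrix (Conf k) (Conf l) ℂ) :
    dT v Z * rT G Y = dT (Matrix.vecMul v G) (Z * Y) := by
  ext o i
  simp only [dT, rT, Matrix.mul_apply, Matrix.of_apply, Matrix.vecMul, dotProduct]
  rw [sum_conf_succ (fun j => (v (j (Fin.last k)) * Z o fun a => j a.castSucc) *
      (G (j (Fin.last k)) (i (Fin.last l)) * Y (fun a => j a.castSucc) fun a => i a.castSucc))]
  simp only [Fin.snoc_last, Fin.snoc_castSucc]
  rw [Finset.sum_comm, Finset.sum_mul_sum]
  refine Finset.sum_congr rfl fun b _ => Finset.sum_congr rfl fun t _ => by ring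

lemma rT_dT_swap {m l : ℕ} (e e' f : Bool) (Y : Matrix (Conf m) (Conf l) ℂ) :
    rT (Eop e e') (dT (dl f) Y) = dT (dl e) (rT (Eop f e') Y) := by
  ext o i
  simp only [rT, dT, Eop, dl, Matrix.of_apply]
  split_ifs <;> simp_all <;> ring

lemma vecMul_dl_Eop (e f f' : Bool) :
    Matrix.vecMul (dl e) (Eop f f') = if e = f' then dl f else 0 := by
  funext b
  simp only [Matrix.vecMul, dotProduct, Eop, dl, Fintype.sum_bool, Matrix.of_apply]
  cases e <;> cases f <;> cases f' <;> cases b <;> simp [dl]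

lemma Eop_mul (e e' f f' : Bool) :
    Eop e e' * Eop f f' = if e = f' then Eop f e' else 0 := by
  ext x y
  simp only [Eop, Matrix.mul_apply, Fintype.sum_bool, Matrix.of_apply]
  cases e <;> cases e' <;> cases f <;> cases f' <;> cases x <;> cases y <;> simp

lemma Eop_add_Eop : Eop true true + Eop false false = (1 : Matrix Bool Bool ℂ) := by
  ext x y
  simp only [Eop, Matrix.add_apply, Matrix.one_apply, Matrix.of_apply]
  cases x <;> cases y <;> simp

@[simp] lemma rT_zero_left {m l : ℕ} (X : Matrix (Conf m) (Conf l) ℂ) :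
    rT 0 X = 0 := by ext o i; simp [rT]

@[simp] lemma rT_zero_right {m l : ℕ} (F : Matrix Bool Bool ℂ) :
    rT (m := m) (m' := l) F 0 = 0 := by ext o i; simp [rT]

@[simp] lemma dT_zero_left {m l : ℕ} (X : Matrix (Conf m) (Conf l) ℂ) :
    dT 0 X = 0 := by ext o i; simp [dT]

@[simp] lemma dT_zero_right {m l : ℕ} (v : Bool → ℂ) :
    dT (m := m) (m' := l) v 0 = 0 := by ext o i; simp [dT]

lemma rT_add_right {m l : ℕ} (F : Matrix Bool Bool ℂ) (X Y : Matrix (Conf m) (Conf l) ℂ) :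
    rT F (X + Y) = rT F X + rT F Y := by ext o i; simp [rT]; ring

lemma rT_smul_right {m l : ℕ} (F : Matrix Bool Bool ℂ) (c : ℂ) (X : Matrix (Conf m) (Conf l) ℂ) :
    rT F (c • X) = c • rT F X := by ext o i; simp [rT]; ring

lemma rT_add_left {m l : ℕ} (F G : Matrix Bool Bool ℂ) (X : Matrix (Conf m) (Conf l) ℂ) :
    rT (F + G) X = rT F X + rT G X := by ext o i; simp [rT]; ring

lemma rT_smul_left {m l : ℕ} (F : Matrix Bool Bool ℂ) (c : ℂ) (X : Matrix (Conf m) (Conf l) ℂ) :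
    rT (c • F) X = c • rT F X := by ext o i; simp [rT]; ring

lemma dT_add_right {m l : ℕ} (v : Bool → ℂ) (X Y : Matrix (Conf m) (Conf l) ℂ) :
    dT v (X + Y) = dT v X + dT v Y := by ext o i; simp [dT]; ring

lemma dT_smul_right {m l : ℕ} (v : Bool → ℂ) (c : ℂ) (X : Matrix (Conf m) (Conf l) ℂ) :
    dT v (c • X) = c • dT v X := by ext o i; simp [dT]; ring

lemma rT_sum_smul {m l : ℕ} (F : Matrix Bool Bool ℂ) {ι : Type*} (s : Finset ι)
    (c : ι → ℂ) (X : ι → Matrix (Conf m) (Conf l) ℂ) :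
    rT F (∑ k ∈ s, c k • X k) = ∑ k ∈ s, c k • rT F (X k) := by
  ext o i
  simp [rT, Finset.sum_apply, Finset.mul_sum, Matrix.sum_apply]
  exact Finset.sum_congr rfl fun t _ => by ring

end XXZ
namespace XXZ

/-- Embed an operator on `V₀ ⊗ V^⊗K` into `V₀ ⊗ V^⊗(K+1)` acting as the identity on the
new leftmost site. -/
def emb {K : ℕ} (M : Matrix (Bool × Conf K) (Bool × Conf K) ℂ) :
    Matrix (Bool × Conf (K + 1)) (Bool × Conf (K + 1)) ℂ :=
  Matrix.of fun x y =>
    if x.2 (Fin.last K) = y.2 (Fin.last K) then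
      M (x.1, fun j => x.2 j.castSucc) (y.1, fun j => y.2 j.castSucc) else 0

/-- The auxiliary-space blocks of an operator on `V₀ ⊗ V^⊗K`. -/
def blk {K : ℕ} (P : Matrix (Bool × Conf K) (Bool × Conf K) ℂ) (e f : Bool) :
    Matrix (Conf K) (Conf K) ℂ :=
  Matrix.of fun s t => P (e, s) (f, t)

/-- The auxiliary-space blocks of the R-matrix, as one-site operators. -/
def Rb (u : ℂ) (e f : Bool) : Matrix Bool Bool ℂ :=
  Matrix.of fun o i => Rm u (e, o) (f, i)

lemma blk_mul {K : ℕ} (P Q : Matrix (Bool × Conf K) (Bool × Conf K) ℂ) (e f : Bool) :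
    blk (P * Q) e f = blk P e true * blk Q true f + blk P e false * blk Q false f := by
  ext s t
  simp only [blk, Matrix.mul_apply, Matrix.of_apply, Matrix.add_apply, Fintype.sum_prod_type,
    Fintype.sum_bool]

lemma blk_emb {K : ℕ} (M : Matrix (Bool × Conf K) (Bool × Conf K) ℂ) (e f : Bool) :
    blk (emb M) e f = rT 1 (blk M e f) := by
  ext s t
  simp only [blk, emb, rT, Matrix.of_apply, Matrix.one_apply]
  split_ifs <;> simp

lemma forall_ne_last_iff {K : ℕ} (s t : Conf (K + 1)) :
    (∀ j, j ≠ Fin.last K → s j = t j) ↔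
      (fun j : Fin K => s j.castSucc) = fun j => t j.castSucc := by
  constructor
  · intro h
    funext j
    exact h j.castSucc (Fin.castSucc_lt_last j).ne
  · intro h j hj
    rcases Fin.exists_castSucc_eq.2 hj with ⟨j', rfl⟩
    exact congrFun h j'

lemma blk_RL {K : ℕ} (u : ℂ) (e f : Bool) :
    blk (R0i (K + 1) u (Fin.last K)) e f = rT (Rb u e f) 1 := by
  ext s t
  simp only [blk, R0i, rT, Rb, Matrix.of_apply, Matrix.one_apply]
  by_cases h : (fun j : Fin K => s j.castSucc) = fun j => t j.castSucc
  · rw [if_pos ((forall_ne_last_iff s t).2 h), if_pos h, mul_one]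
  · rw [if_neg (fun hh => h ((forall_ne_last_iff s t).1 hh)), if_neg h, mul_zero]

lemma conf_eq_iff {K : ℕ} (s t : Conf (K + 1)) :
    s = t ↔ (s (Fin.last K) = t (Fin.last K) ∧
      (fun j : Fin K => s j.castSucc) = fun j => t j.castSucc) := by
  constructor
  · rintro rfl; exact ⟨rfl, rfl⟩
  · rintro ⟨h1, h2⟩
    funext j
    refine Fin.lastCases ?_ (fun jj => ?_) j
    · exact h1
    · exact congrFun h2 jj

lemma emb_one {K : ℕ} : emb (1 : Matrix (Bool × Conf K) (Bool × Conf K) ℂ) = 1 := by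
  ext x y
  obtain ⟨e, s⟩ := x
  obtain ⟨f, t⟩ := y
  simp only [emb, Matrix.of_apply, Matrix.one_apply, Prod.mk.injEq, Prod.ext_iff]
  by_cases h : s (Fin.last K) = t (Fin.last K) <;>
    by_cases h2 : (fun j : Fin K => s j.castSucc) = fun j => t j.castSucc <;>
      simp_all [conf_eq_iff s t]

lemma emb_mul {K : ℕ} (M M' : Matrix (Bool × Conf K) (Bool × Conf K) ℂ) :
    emb M * emb M' = emb (M * M') := by
  ext x y
  obtain ⟨e, s⟩ := x
  obtain ⟨f, t⟩ := y
  simp only [emb, Matrix.mul_apply, Matrix.of_apply, Fintype.sum_prod_type, sum_conf_succ,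
    Fin.snoc_last, Fin.snoc_castSucc]
  rcases hb : s (Fin.last K) <;> rcases ht : t (Fin.last K) <;>
    simp [Fintype.sum_bool, Matrix.mul_apply, Fintype.sum_prod_type, hb, ht]

end XXZ
namespace XXZ

lemma Rm_symm (u : ℂ) (x1 x2 y1 y2 : Bool) :
    Rm u (x1, x2) (y1, y2) = Rm u (x2, x1) (y2, y1) := by
  cases x1 <;> cases x2 <;> cases y1 <;> cases y2 <;> simp [Rm]

lemma Ri0_eq_R0i (N : ℕ) (u : ℂ) (i : Fin N) : Ri0 N u i = R0i N u i := by
  ext x y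
  simp only [Ri0, R0i, Matrix.of_apply]
  rw [Rm_symm]

lemma R0i_castSucc (K : ℕ) (u : ℂ) (i : Fin K) :
    R0i (K + 1) u i.castSucc = emb (R0i K u i) := by
  ext x y
  obtain ⟨e, s⟩ := x
  obtain ⟨f, t⟩ := y
  simp only [R0i, emb, Matrix.of_apply]
  have hiff : (∀ j, j ≠ i.castSucc → s j = t j) ↔
      (s (Fin.last K) = t (Fin.last K) ∧ ∀ j : Fin K, j ≠ i → s j.castSucc = t j.castSucc) := by
    constructor
    · intro h
      refine ⟨h _ (Fin.castSucc_lt_last i).ne', fun j hj => h _ (by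
        simp [Fin.castSucc_inj, hj])⟩
    · rintro ⟨h1, h2⟩ j hj
      refine Fin.lastCases ?_ (fun jj hjj => ?_) j hj
      · intro _; exact h1
      · exact h2 jj (fun hh => hjj (by rw [hh]))
  by_cases h : ∀ j, j ≠ i.castSucc → s j = t j
  · have h' := hiff.1 h
    rw [if_pos h, if_pos h'.1, if_pos h'.2]
  · rw [if_neg h]
    by_cases h1 : s (Fin.last K) = t (Fin.last K)
    · rw [if_pos h1, if_neg (fun h2 => h (hiff.2 ⟨h1, h2⟩))]
    · rw [if_neg h1]

lemma prod_map_emb {K : ℕ} (l : List (Matrix (Bool × Conf K) (Bool × Conf K) ℂ)) :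
    (l.map emb).prod = emb l.prod := by
  induction l with
  | nil => simp [emb_one]
  | cons a l ih => simp [ih, emb_mul]

lemma Tmono_succ (K : ℕ) (u : ℂ) :
    Tmono (K + 1) u = emb (Tmono K u) * R0i (K + 1) u (Fin.last K) := by
  rw [Tmono, List.ofFn_succ', List.concat_eq_append, List.prod_append, List.prod_cons,
    List.prod_nil, mul_one]
  congr 1
  have : (List.ofFn fun i : Fin K => R0i (K + 1) u i.castSucc)
      = (List.ofFn fun i : Fin K => R0i K u i).map emb := by
    rw [List.map_ofFn]
    congr 1
    funext i
    simp only [Function.comp_apply, R0i_castSucc]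
  rw [this, prod_map_emb, Tmono]

lemma Tbar_succ (K : ℕ) (u : ℂ) :
    Tbar (K + 1) u = R0i (K + 1) u (Fin.last K) * emb (Tbar K u) := by
  rw [Tbar, List.ofFn_succ', List.concat_eq_append, List.reverse_append, List.prod_append]
  simp only [List.reverse_cons, List.reverse_nil, List.nil_append, List.prod_cons, List.prod_nil,
    mul_one]
  congr 1
  · rw [Ri0_eq_R0i]
  · have : (List.ofFn fun i : Fin K => Ri0 (K + 1) u i.castSucc)
        = (List.ofFn fun i : Fin K => Ri0 K u i).map emb := by
      rw [List.map_ofFn]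
      congr 1
      funext i
      simp only [Function.comp_apply, Ri0_eq_R0i, R0i_castSucc]
    rw [this, ← List.map_reverse, prod_map_emb, Tbar]

lemma K0m_succ (K : ℕ) (u : ℂ) : K0m (K + 1) u = emb (K0m K u) := by
  ext x y
  obtain ⟨e, s⟩ := x
  obtain ⟨f, t⟩ := y
  simp only [K0m, emb, Matrix.of_apply]
  by_cases h : s = t
  · subst h; simp
  · rw [if_neg h]
    by_cases h1 : s (Fin.last K) = t (Fin.last K)
    · rw [if_pos h1, if_neg (fun h2 => h ((conf_eq_iff s t).2 ⟨h1, h2⟩))]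
    · rw [if_neg h1]

lemma Umono_succ (K : ℕ) (u : ℂ) :
    Umono (K + 1) u = R0i (K + 1) u (Fin.last K) * emb (Umono K u) * R0i (K + 1) u (Fin.last K) := by
  rw [Umono, Tmono_succ, Tbar_succ, K0m_succ, Umono]
  rw [show R0i (K + 1) u (Fin.last K) * emb (Tbar K u) * emb (K0m K u) *
      (emb (Tmono K u) * R0i (K + 1) u (Fin.last K))
      = R0i (K + 1) u (Fin.last K) * (emb (Tbar K u) * emb (K0m K u) * emb (Tmono K u)) *
        R0i (K + 1) u (Fin.last K) by noncomm_ring]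
  rw [emb_mul, emb_mul]

lemma blk_Umono_succ (K : ℕ) (u : ℂ) (e f : Bool) :
    blk (Umono (K + 1) u) e f =
      rT (Rb u e true * Rb u true f) (blk (Umono K u) true true) +
      rT (Rb u e true * Rb u false f) (blk (Umono K u) true false) +
      rT (Rb u e false * Rb u true f) (blk (Umono K u) false true) +
      rT (Rb u e false * Rb u false f) (blk (Umono K u) false false) := by
  rw [Umono_succ, blk_mul, blk_mul, blk_mul, blk_RL, blk_RL, blk_emb, blk_emb, blk_emb, blk_emb,
    blk_RL, blk_RL, rT_mul, rT_mul, rT_mul, rT_mul]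
  rw [Matrix.add_mul, Matrix.add_mul, rT_mul, rT_mul, rT_mul, rT_mul]
  simp only [Matrix.one_mul, Matrix.mul_one, one_mul, mul_one]
  abel

end XXZ
namespace XXZ

lemma Rb_tt (u : ℂ) : Rb u true true = aF u • Eop true true + bF u • Eop false false := by
  ext o i; cases o <;> cases i <;> simp [Rb, Rm, Eop]

lemma Rb_ff (u : ℂ) : Rb u false false = bF u • Eop true true + aF u • Eop false false := by
  ext o i; cases o <;> cases i <;> simp [Rb, Rm, Eop]

lemma Rb_tf (u : ℂ) : Rb u true false = Eop true false := by
  ext o i; cases o <;> cases i <;> simp [Rb, Rm, Eop, cF]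

lemma Rb_ft (u : ℂ) : Rb u false true = Eop false true := by
  ext o i; cases o <;> cases i <;> simp [Rb, Rm, Eop, cF]

lemma Aop_blk (K : ℕ) (u : ℂ) : Aop K u = blk (Umono K u) true true := rfl
lemma Bop_blk (K : ℕ) (u : ℂ) : Bop K u = blk (Umono K u) true false := rfl
lemma Cop_blk (K : ℕ) (u : ℂ) : Cop K u = blk (Umono K u) false true := rfl
lemma Dop_blk (K : ℕ) (u : ℂ) : Dop K u = blk (Umono K u) false false := rfl

lemma Umono_zero (u : ℂ) : Umono 0 u = K0m 0 u := by
  rw [Umono, Tmono, Tbar]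
  simp [List.ofFn_zero]

lemma Aop_zero (u : ℂ) : Aop 0 u = dF u • 1 := by
  ext s t
  rw [Aop, Matrix.of_apply, Umono_zero]
  simp [K0m, Km, Subsingleton.elim s t, Matrix.one_apply]

lemma Bop_zero (u : ℂ) : Bop 0 u = 0 := by
  ext s t
  rw [Bop, Matrix.of_apply, Umono_zero]
  simp [K0m, Km, Subsingleton.elim s t]

lemma Cop_zero (u : ℂ) : Cop 0 u = 0 := by
  ext s t
  rw [Cop, Matrix.of_apply, Umono_zero]
  simp [K0m, Km, Subsingleton.elim s t]

lemma Dop_zero (u : ℂ) : Dop 0 u = (-aF u) • 1 := by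
  ext s t
  rw [Dop, Matrix.of_apply, Umono_zero]
  simp [K0m, Km, Subsingleton.elim s t, Matrix.one_apply]

lemma Aop_succ (K : ℕ) (u : ℂ) :
    Aop (K + 1) u =
      aF u ^ 2 • rT (Eop true true) (Aop K u) + bF u ^ 2 • rT (Eop false false) (Aop K u) +
      aF u • rT (Eop false true) (Bop K u) + aF u • rT (Eop true false) (Cop K u) +
      rT (Eop false false) (Dop K u) := by
  calc Aop (K + 1) u = blk (Umono (K + 1) u) true true := rfl
    _ = _ := blk_Umono_succ K u true true
    _ = _ := by
        rw [show blk (Umono K u) true true = Aop K u from rfl,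
          show blk (Umono K u) true false = Bop K u from rfl,
          show blk (Umono K u) false true = Cop K u from rfl,
          show blk (Umono K u) false false = Dop K u from rfl,
          Rb_tt, Rb_tf, Rb_ft]
        simp only [Matrix.add_mul, Matrix.mul_add, Matrix.smul_mul, Matrix.mul_smul, smul_smul,
          Eop_mul, rT_add_left, rT_smul_left, rT_zero_left]
        simp only [Bool.true_eq_false, Bool.false_eq_true, if_true, if_false, ite_true, ite_false,
          reduceIte, smul_zero, add_zero, zero_add, rT_zero_left]
        module

lemma Bop_succ (K : ℕ) (u : ℂ) :
    Bop (K + 1) u =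
      bF u • rT (Eop true false) (Aop K u) + (aF u * bF u) • rT (Eop true true) (Bop K u) +
      (aF u * bF u) • rT (Eop false false) (Bop K u) + bF u • rT (Eop true false) (Dop K u) := by
  calc Bop (K + 1) u = blk (Umono (K + 1) u) true false := rfl
    _ = _ := blk_Umono_succ K u true false
    _ = _ := by
        rw [show blk (Umono K u) true true = Aop K u from rfl,
          show blk (Umono K u) true false = Bop K u from rfl,
          show blk (Umono K u) false true = Cop K u from rfl,
          show blk (Umono K u) false false = Dop K u from rfl,
          Rb_tt, Rb_ff, Rb_tf]
        simp only [Matrix.add_mul, Matrix.mul_add, Matrix.smul_mul, Matrix.mul_smul, smul_smul,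
          Eop_mul, rT_add_left, rT_smul_left, rT_zero_left]
        simp only [Bool.true_eq_false, Bool.false_eq_true, if_true, if_false, ite_true, ite_false,
          reduceIte, smul_zero, add_zero, zero_add, rT_zero_left]
        module

lemma Cop_succ (K : ℕ) (u : ℂ) :
    Cop (K + 1) u =
      bF u • rT (Eop false true) (Aop K u) + (aF u * bF u) • rT (Eop true true) (Cop K u) +
      (aF u * bF u) • rT (Eop false false) (Cop K u) + bF u • rT (Eop false true) (Dop K u) := by
  calc Cop (K + 1) u = blk (Umono (K + 1) u) false true := rfl
    _ = _ := blk_Umono_succ K u false true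
    _ = _ := by
        rw [show blk (Umono K u) true true = Aop K u from rfl,
          show blk (Umono K u) true false = Bop K u from rfl,
          show blk (Umono K u) false true = Cop K u from rfl,
          show blk (Umono K u) false false = Dop K u from rfl,
          Rb_tt, Rb_ff, Rb_ft]
        simp only [Matrix.add_mul, Matrix.mul_add, Matrix.smul_mul, Matrix.mul_smul, smul_smul,
          Eop_mul, rT_add_left, rT_smul_left, rT_zero_left]
        simp only [Bool.true_eq_false, Bool.false_eq_true, if_true, if_false, ite_true, ite_false,
          reduceIte, smul_zero, add_zero, zero_add, rT_zero_left]
        module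

lemma Dop_succ (K : ℕ) (u : ℂ) :
    Dop (K + 1) u =
      rT (Eop true true) (Aop K u) + aF u • rT (Eop false true) (Bop K u) +
      aF u • rT (Eop true false) (Cop K u) + bF u ^ 2 • rT (Eop true true) (Dop K u) +
      aF u ^ 2 • rT (Eop false false) (Dop K u) := by
  calc Dop (K + 1) u = blk (Umono (K + 1) u) false false := rfl
    _ = _ := blk_Umono_succ K u false false
    _ = _ := by
        rw [show blk (Umono K u) true true = Aop K u from rfl,
          show blk (Umono K u) true false = Bop K u from rfl,
          show blk (Umono K u) false true = Cop K u from rfl,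
          show blk (Umono K u) false false = Dop K u from rfl,
          Rb_ff, Rb_tf, Rb_ft]
        simp only [Matrix.add_mul, Matrix.mul_add, Matrix.smul_mul, Matrix.mul_smul, smul_smul,
          Eop_mul, rT_add_left, rT_smul_left, rT_zero_left]
        simp only [Bool.true_eq_false, Bool.false_eq_true, if_true, if_false, ite_true, ite_false,
          reduceIte, smul_zero, add_zero, zero_add, rT_zero_left]
        module

end XXZ
namespace XXZ

lemma forall_last_iff' {n : ℕ} (o : Conf (n + 1)) (i : Conf (n + 2)) :
    (∀ j : Fin (n + 1), ((j : ℕ) < n → o j = i (Fin.castSucc j)) ∧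
        (n < (j : ℕ) → o j = i (Fin.succ j))) ↔
      ((fun j : Fin n => o (Fin.castSucc j)) =
        fun j => i (Fin.castSucc (Fin.castSucc j))) := by
  constructor
  · intro h
    funext j
    exact (h j.castSucc).1 (by simpa using j.isLt)
  · intro h j
    constructor
    · intro hj
      have hne : j ≠ Fin.last n := by
        intro hh
        rw [hh, Fin.val_last] at hj
        omega
      rcases Fin.exists_castSucc_eq.2 hne with ⟨j', rfl⟩
      exact congrFun h j'
    · intro hj
      exact absurd hj (by omega)

lemma qMerge_last (n : ℕ) :
    qMerge n (Fin.last n) = dT (dl true) (rT (Eop true false) (1 : Matrix (Conf n) (Conf n) ℂ)) := by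
  ext o i
  simp only [qMerge, dT, rT, dl, Eop, Matrix.of_apply, Matrix.one_apply, Fin.succ_last,
    Fin.val_last]
  simp only [forall_last_iff']
  split_ifs <;> simp_all

lemma forall_castSucc_iff' {n : ℕ} (k : Fin (n + 1)) (o : Conf (n + 2)) (i : Conf (n + 3)) :
    (∀ j : Fin (n + 2), ((j : ℕ) < (k : ℕ) → o j = i (Fin.castSucc j)) ∧
        ((k : ℕ) < (j : ℕ) → o j = i (Fin.succ j))) ↔
      (o (Fin.last (n + 1)) = i (Fin.last (n + 2)) ∧
        ∀ j : Fin (n + 1), ((j : ℕ) < (k : ℕ) →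
            o (Fin.castSucc j) = i (Fin.castSucc (Fin.castSucc j))) ∧
          ((k : ℕ) < (j : ℕ) → o (Fin.castSucc j) = i (Fin.castSucc (Fin.succ j)))) := by
  constructor
  · intro h
    refine ⟨?_, fun j => ⟨fun hj => ?_, fun hj => ?_⟩⟩
    · have := (h (Fin.last (n + 1))).2 (by simp [Fin.val_last]; omega)
      rwa [Fin.succ_last] at this
    · exact (h j.castSucc).1 (by simpa using hj)
    · have := (h j.castSucc).2 (by simpa using hj)
      rwa [Fin.succ_castSucc] at this
  · rintro ⟨hlast, h⟩ j
    refine Fin.lastCases ?_ (fun jj => ?_) j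
    · exact ⟨fun hj => absurd hj (by simp [Fin.val_last]), fun _ => by
        rwa [Fin.succ_last]⟩
    · exact ⟨fun hj => (h jj).1 (by simpa using hj), fun hj => by
        rw [Fin.succ_castSucc]; exact (h jj).2 (by simpa using hj)⟩

lemma qMerge_castSucc (n : ℕ) (k : Fin (n + 1)) :
    qMerge (n + 1) (Fin.castSucc k) = rT 1 (qMerge n k) := by
  ext o i
  simp only [qMerge, rT, Matrix.of_apply, Matrix.one_apply, Fin.succ_castSucc,
    Fin.coe_castSucc]
  simp only [forall_castSucc_iff']
  split_ifs <;> simp_all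

lemma Qop_zero : Qop 0 = dT (dl true) (rT (Eop true false) (1 : Matrix (Conf 0) (Conf 0) ℂ)) := by
  rw [Qop]
  rw [show (Finset.univ : Finset (Fin 1)) = {0} from rfl, Finset.sum_singleton]
  rw [show ((0 : Fin 1) : ℕ) = 0 from rfl, pow_zero, one_smul,
    show (0 : Fin 1) = Fin.last 0 from rfl, qMerge_last]

lemma Qop_succ (n : ℕ) :
    Qop (n + 1) = rT 1 (Qop n) +
      ((-1 : ℂ) ^ (n + 1)) • dT (dl true) (rT (Eop true false) 1) := by
  rw [Qop, Fin.sum_univ_castSucc]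
  congr 1
  · rw [Qop, rT_sum_smul]
    exact Finset.sum_congr rfl fun k _ => by
      rw [qMerge_castSucc, Fin.coe_castSucc]
  · rw [Fin.val_last, qMerge_last]

end XXZ
namespace XXZ

lemma cosh_eta : Complex.cosh ηc = -(1 / 2) := by
  have h : ηc = ((2 * Real.pi / 3 : ℝ) : ℂ) * Complex.I := by
    rw [ηc]; push_cast; ring
  rw [h, Complex.cosh_mul_I, ← Complex.ofReal_cos]
  rw [show (2 * Real.pi / 3 : ℝ) = Real.pi - Real.pi / 3 by ring, Real.cos_pi_sub,
    Real.cos_pi_div_three]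
  norm_num

lemma sinh_eta_sq : Complex.sinh ηc ^ 2 = -(3 / 4) := by
  have h := Complex.cosh_sq_sub_sinh_sq ηc
  rw [cosh_eta] at h
  linear_combination -h

lemma sinh_eta_ne : Complex.sinh ηc ≠ 0 := by
  intro h
  have := sinh_eta_sq
  rw [h] at this
  norm_num at this

lemma dF_eq (u : ℂ) : dF u = -aF u - bF u := by
  rw [dF, aF, bF, Complex.sinh_add, Complex.sinh_sub, cosh_eta]
  field_simp
  ring

lemma habd (u : ℂ) : aF u ^ 2 + aF u * bF u + bF u ^ 2 = 1 := by
  have hc : Complex.cosh u ^ 2 = 1 + Complex.sinh u ^ 2 := by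
    linear_combination Complex.cosh_sq_sub_sinh_sq u
  have hne := sinh_eta_ne
  have key : (Complex.sinh u * (-(1 / 2)) + Complex.cosh u * Complex.sinh ηc) ^ 2 +
      (Complex.sinh u * (-(1 / 2)) + Complex.cosh u * Complex.sinh ηc) * Complex.sinh u +
      Complex.sinh u ^ 2 = Complex.sinh ηc ^ 2 := by
    linear_combination (Complex.cosh u ^ 2 - 1) * sinh_eta_sq - (3 / 4) * hc
  rw [aF, bF, Complex.sinh_add, cosh_eta, div_pow, div_pow, div_mul_div_comm,
    show Complex.sinh ηc * Complex.sinh ηc = Complex.sinh ηc ^ 2 from (sq _).symm,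
    ← add_div, ← add_div, key, div_self (pow_ne_zero 2 hne)]

end XXZ
namespace XXZ

section LR
variable (K : ℕ) (u : ℂ)

lemma mulL_A : rT (Eop true false) 1 * Aop (K + 1) u =
    aF u ^ 2 • rT (Eop true false) (Aop K u) + aF u • rT (Eop false false) (Bop K u) := by
  rw [Aop_succ]
  simp only [Matrix.mul_add, Matrix.mul_smul, rT_mul, Eop_mul, Matrix.one_mul, one_mul, mul_one,
    Bool.true_eq_false, Bool.false_eq_true, if_true, if_false, ite_true, ite_false, reduceIte,
    rT_zero_left, smul_zero, add_zero, zero_add]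

lemma mulL_B : rT (Eop true false) 1 * Bop (K + 1) u =
    (aF u * bF u) • rT (Eop true false) (Bop K u) := by
  rw [Bop_succ]
  simp only [Matrix.mul_add, Matrix.mul_smul, rT_mul, Eop_mul, Matrix.one_mul, one_mul, mul_one,
    Bool.true_eq_false, Bool.false_eq_true, if_true, if_false, ite_true, ite_false, reduceIte,
    rT_zero_left, smul_zero, add_zero, zero_add]

lemma mulL_C : rT (Eop true false) 1 * Cop (K + 1) u =
    bF u • rT (Eop false false) (Aop K u) + (aF u * bF u) • rT (Eop true false) (Cop K u) +
      bF u • rT (Eop false false) (Dop K u) := by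
  rw [Cop_succ]
  simp only [Matrix.mul_add, Matrix.mul_smul, rT_mul, Eop_mul, Matrix.one_mul, one_mul, mul_one,
    Bool.true_eq_false, Bool.false_eq_true, if_true, if_false, ite_true, ite_false, reduceIte,
    rT_zero_left, smul_zero, add_zero, zero_add]

lemma mulL_D : rT (Eop true false) 1 * Dop (K + 1) u =
    rT (Eop true false) (Aop K u) + aF u • rT (Eop false false) (Bop K u) +
      bF u ^ 2 • rT (Eop true false) (Dop K u) := by
  rw [Dop_succ]
  simp only [Matrix.mul_add, Matrix.mul_smul, rT_mul, Eop_mul, Matrix.one_mul, one_mul, mul_one,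
    Bool.true_eq_false, Bool.false_eq_true, if_true, if_false, ite_true, ite_false, reduceIte,
    rT_zero_left, smul_zero, add_zero, zero_add]

lemma mulR_A : Aop (K + 1) u * rT (Eop true false) 1 =
    bF u ^ 2 • rT (Eop true false) (Aop K u) + aF u • rT (Eop true true) (Bop K u) +
      rT (Eop true false) (Dop K u) := by
  rw [Aop_succ]
  simp only [Matrix.add_mul, Matrix.smul_mul, rT_mul, Eop_mul, Matrix.mul_one, one_mul, mul_one,
    Bool.true_eq_false, Bool.false_eq_true, if_true, if_false, ite_true, ite_false, reduceIte,
    rT_zero_left, smul_zero, add_zero, zero_add]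

lemma mulR_B : Bop (K + 1) u * rT (Eop true false) 1 =
    (aF u * bF u) • rT (Eop true false) (Bop K u) := by
  rw [Bop_succ]
  simp only [Matrix.add_mul, Matrix.smul_mul, rT_mul, Eop_mul, Matrix.mul_one, one_mul, mul_one,
    Bool.true_eq_false, Bool.false_eq_true, if_true, if_false, ite_true, ite_false, reduceIte,
    rT_zero_left, smul_zero, add_zero, zero_add]

lemma mulR_C : Cop (K + 1) u * rT (Eop true false) 1 =
    bF u • rT (Eop true true) (Aop K u) + (aF u * bF u) • rT (Eop true false) (Cop K u) +
      bF u • rT (Eop true true) (Dop K u) := by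
  rw [Cop_succ]
  simp only [Matrix.add_mul, Matrix.smul_mul, rT_mul, Eop_mul, Matrix.mul_one, one_mul, mul_one,
    Bool.true_eq_false, Bool.false_eq_true, if_true, if_false, ite_true, ite_false, reduceIte,
    rT_zero_left, smul_zero, add_zero, zero_add]

lemma mulR_D : Dop (K + 1) u * rT (Eop true false) 1 =
    aF u • rT (Eop true true) (Bop K u) + aF u ^ 2 • rT (Eop true false) (Dop K u) := by
  rw [Dop_succ]
  simp only [Matrix.add_mul, Matrix.smul_mul, rT_mul, Eop_mul, Matrix.mul_one, one_mul, mul_one,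
    Bool.true_eq_false, Bool.false_eq_true, if_true, if_false, ite_true, ite_false, reduceIte,
    rT_zero_left, smul_zero, add_zero, zero_add]

end LR
end XXZ
namespace XXZ

def Rel (n : ℕ) (u : ℂ) : Prop :=
  (Qop n * Aop (n + 1 + 1) u = dF u ^ 2 • (Aop (n + 1) u * Qop n) +
      ((-1 : ℂ) ^ n * dF u) • dT (dl true) (Bop (n + 1) u)) ∧
  (Qop n * Bop (n + 1 + 1) u = dF u ^ 2 • (Bop (n + 1) u * Qop n)) ∧
  (Qop n * Cop (n + 1 + 1) u = dF u ^ 2 • (Cop (n + 1) u * Qop n) +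
      ((-1 : ℂ) ^ n * aF u) • dT (dl true) (Aop (n + 1) u) +
      ((-1 : ℂ) ^ n) • dT (dl false) (Bop (n + 1) u) +
      ((-1 : ℂ) ^ n * dF u) • dT (dl true) (Dop (n + 1) u)) ∧
  (Qop n * Dop (n + 1 + 1) u = dF u ^ 2 • (Dop (n + 1) u * Qop n) +
      ((-1 : ℂ) ^ n * bF u) • dT (dl true) (Bop (n + 1) u))

lemma rel_zero (u : ℂ) : Rel 0 u := by
  have hd : dF u = -aF u - bF u := dF_eq u
  refine ⟨?_, ?_, ?_, ?_⟩
  · rw [Qop_zero, Aop_succ (0 + 1) u]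
    simp only [Aop_succ 0 u, Bop_succ 0 u, Cop_succ 0 u, Dop_succ 0 u, Aop_zero, Bop_zero,
      Cop_zero, Dop_zero]
    simp only [Matrix.mul_add, Matrix.add_mul, Matrix.mul_smul, Matrix.smul_mul, dT_mul_rT,
      mul_dT, vecMul_dl_Eop, rT_mul, Eop_mul, Matrix.one_mul, Matrix.mul_one, one_mul, mul_one,
      Bool.true_eq_false, Bool.false_eq_true, if_true, if_false, ite_true, ite_false, reduceIte,
      rT_zero_left, rT_zero_right, dT_zero_left, dT_zero_right, smul_zero, zero_smul,
      Matrix.mul_zero, Matrix.zero_mul, add_zero, zero_add, smul_smul,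
      rT_add_right, rT_smul_right, dT_add_right, dT_smul_right, rT_dT_swap]
    all_goals rw [hd]
    all_goals match_scalars <;>
      first
      | ring1
      | linear_combination (-aF u ^ 3 + 2 * aF u * bF u ^ 2 + bF u ^ 3) * habd u
      | linear_combination (aF u ^ 3 - 2 * aF u * bF u ^ 2 - bF u ^ 3) * habd u
      | linear_combination (aF u * bF u) * habd u
      | linear_combination (-(aF u * bF u)) * habd u
      | linear_combination (aF u ^ 2) * habd u
      | linear_combination (-(aF u ^ 2)) * habd u
      | linear_combination (aF u ^ 2 + 2 * aF u * bF u + bF u ^ 2) * habd u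
      | linear_combination (-(aF u ^ 2 + 2 * aF u * bF u + bF u ^ 2)) * habd u
      | linear_combination (aF u ^ 3 + aF u ^ 2 * bF u - aF u * bF u ^ 2) * habd u
      | linear_combination (-(aF u ^ 3 + aF u ^ 2 * bF u - aF u * bF u ^ 2)) * habd u
  · rw [Qop_zero, Bop_succ (0 + 1) u]
    simp only [Aop_succ 0 u, Bop_succ 0 u, Cop_succ 0 u, Dop_succ 0 u, Aop_zero, Bop_zero,
      Cop_zero, Dop_zero]
    simp only [Matrix.mul_add, Matrix.add_mul, Matrix.mul_smul, Matrix.smul_mul, dT_mul_rT,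
      mul_dT, vecMul_dl_Eop, rT_mul, Eop_mul, Matrix.one_mul, Matrix.mul_one, one_mul, mul_one,
      Bool.true_eq_false, Bool.false_eq_true, if_true, if_false, ite_true, ite_false, reduceIte,
      rT_zero_left, rT_zero_right, dT_zero_left, dT_zero_right, smul_zero, zero_smul,
      Matrix.mul_zero, Matrix.zero_mul, add_zero, zero_add, smul_smul,
      rT_add_right, rT_smul_right, dT_add_right, dT_smul_right, rT_dT_swap]
    all_goals rw [hd]
    all_goals match_scalars <;>
      first
      | ring1
      | linear_combination (-aF u ^ 3 + 2 * aF u * bF u ^ 2 + bF u ^ 3) * habd u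
      | linear_combination (aF u ^ 3 - 2 * aF u * bF u ^ 2 - bF u ^ 3) * habd u
      | linear_combination (aF u * bF u) * habd u
      | linear_combination (-(aF u * bF u)) * habd u
      | linear_combination (aF u ^ 2) * habd u
      | linear_combination (-(aF u ^ 2)) * habd u
      | linear_combination (aF u ^ 2 + 2 * aF u * bF u + bF u ^ 2) * habd u
      | linear_combination (-(aF u ^ 2 + 2 * aF u * bF u + bF u ^ 2)) * habd u
      | linear_combination (aF u ^ 3 + aF u ^ 2 * bF u - aF u * bF u ^ 2) * habd u
      | linear_combination (-(aF u ^ 3 + aF u ^ 2 * bF u - aF u * bF u ^ 2)) * habd u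
  · rw [Qop_zero, Cop_succ (0 + 1) u]
    simp only [Aop_succ 0 u, Bop_succ 0 u, Cop_succ 0 u, Dop_succ 0 u, Aop_zero, Bop_zero,
      Cop_zero, Dop_zero]
    simp only [Matrix.mul_add, Matrix.add_mul, Matrix.mul_smul, Matrix.smul_mul, dT_mul_rT,
      mul_dT, vecMul_dl_Eop, rT_mul, Eop_mul, Matrix.one_mul, Matrix.mul_one, one_mul, mul_one,
      Bool.true_eq_false, Bool.false_eq_true, if_true, if_false, ite_true, ite_false, reduceIte,
      rT_zero_left, rT_zero_right, dT_zero_left, dT_zero_right, smul_zero, zero_smul,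
      Matrix.mul_zero, Matrix.zero_mul, add_zero, zero_add, smul_smul,
      rT_add_right, rT_smul_right, dT_add_right, dT_smul_right, rT_dT_swap]
    all_goals rw [hd]
    all_goals match_scalars <;>
      first
      | ring1
      | linear_combination (-aF u ^ 3 + 2 * aF u * bF u ^ 2 + bF u ^ 3) * habd u
      | linear_combination (aF u ^ 3 - 2 * aF u * bF u ^ 2 - bF u ^ 3) * habd u
      | linear_combination (aF u * bF u) * habd u
      | linear_combination (-(aF u * bF u)) * habd u
      | linear_combination (aF u ^ 2) * habd u
      | linear_combination (-(aF u ^ 2)) * habd u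
      | linear_combination (aF u ^ 2 + 2 * aF u * bF u + bF u ^ 2) * habd u
      | linear_combination (-(aF u ^ 2 + 2 * aF u * bF u + bF u ^ 2)) * habd u
      | linear_combination (aF u ^ 3 + aF u ^ 2 * bF u - aF u * bF u ^ 2) * habd u
      | linear_combination (-(aF u ^ 3 + aF u ^ 2 * bF u - aF u * bF u ^ 2)) * habd u
  · rw [Qop_zero, Dop_succ (0 + 1) u]
    simp only [Aop_succ 0 u, Bop_succ 0 u, Cop_succ 0 u, Dop_succ 0 u, Aop_zero, Bop_zero,
      Cop_zero, Dop_zero]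
    simp only [Matrix.mul_add, Matrix.add_mul, Matrix.mul_smul, Matrix.smul_mul, dT_mul_rT,
      mul_dT, vecMul_dl_Eop, rT_mul, Eop_mul, Matrix.one_mul, Matrix.mul_one, one_mul, mul_one,
      Bool.true_eq_false, Bool.false_eq_true, if_true, if_false, ite_true, ite_false, reduceIte,
      rT_zero_left, rT_zero_right, dT_zero_left, dT_zero_right, smul_zero, zero_smul,
      Matrix.mul_zero, Matrix.zero_mul, add_zero, zero_add, smul_smul,
      rT_add_right, rT_smul_right, dT_add_right, dT_smul_right, rT_dT_swap]
    all_goals rw [hd]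
    all_goals match_scalars <;>
      first
      | ring1
      | linear_combination (-aF u ^ 3 + 2 * aF u * bF u ^ 2 + bF u ^ 3) * habd u
      | linear_combination (aF u ^ 3 - 2 * aF u * bF u ^ 2 - bF u ^ 3) * habd u
      | linear_combination (aF u * bF u) * habd u
      | linear_combination (-(aF u * bF u)) * habd u
      | linear_combination (aF u ^ 2) * habd u
      | linear_combination (-(aF u ^ 2)) * habd u
      | linear_combination (aF u ^ 2 + 2 * aF u * bF u + bF u ^ 2) * habd u
      | linear_combination (-(aF u ^ 2 + 2 * aF u * bF u + bF u ^ 2)) * habd u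
      | linear_combination (aF u ^ 3 + aF u ^ 2 * bF u - aF u * bF u ^ 2) * habd u
      | linear_combination (-(aF u ^ 3 + aF u ^ 2 * bF u - aF u * bF u ^ 2)) * habd u

end XXZ
namespace XXZ

lemma rel_step (n : ℕ) (u : ℂ) (ih : Rel n u) : Rel (n + 1) u := by
  obtain ⟨ihA, ihB, ihC, ihD⟩ := ih
  have hd : dF u = -aF u - bF u := dF_eq u
  refine ⟨?_, ?_, ?_, ?_⟩
  · -- relation A
    rw [Qop_succ n, Aop_succ (n + 1 + 1) u]
    simp only [Matrix.mul_add, Matrix.add_mul, Matrix.mul_smul, Matrix.smul_mul, dT_mul_rT,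
      mul_dT, vecMul_dl_Eop, rT_mul, Eop_mul, Matrix.one_mul, Matrix.mul_one, one_mul, mul_one,
      Bool.true_eq_false, Bool.false_eq_true, if_true, if_false, ite_true, ite_false, reduceIte,
      rT_zero_left, rT_zero_right, dT_zero_left, dT_zero_right, smul_zero, zero_smul,
      Matrix.mul_zero, Matrix.zero_mul, add_zero, zero_add, smul_smul,
      mulL_A (n + 1) u, mulL_B (n + 1) u, mulL_C (n + 1) u, mulL_D (n + 1) u,
      mulR_A (n + 1) u, mulR_B (n + 1) u, mulR_C (n + 1) u, mulR_D (n + 1) u]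
    simp only [ihA, ihB, ihC, ihD]
    simp only [Aop_succ (n + 1) u, Bop_succ (n + 1) u, Cop_succ (n + 1) u, Dop_succ (n + 1) u]
    simp only [Matrix.mul_add, Matrix.add_mul, Matrix.mul_smul, Matrix.smul_mul, rT_mul,
      Matrix.one_mul, Matrix.mul_one, one_mul, mul_one, Eop_mul,
      Bool.true_eq_false, Bool.false_eq_true, if_true, if_false, ite_true, ite_false, reduceIte,
      rT_zero_left, rT_zero_right, dT_zero_left, dT_zero_right, smul_zero, zero_smul,
      Matrix.mul_zero, Matrix.zero_mul, add_zero, zero_add, smul_smul,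
      rT_add_right, rT_smul_right, dT_add_right, dT_smul_right, rT_dT_swap, smul_add]
    all_goals rw [hd]
    all_goals match_scalars <;>
      first
      | ring1
      | linear_combination ((-1 : ℂ) ^ n * aF u) * habd u
      | linear_combination (-((-1 : ℂ) ^ n * aF u)) * habd u
      | linear_combination ((-1 : ℂ) ^ n * bF u) * habd u
      | linear_combination (-((-1 : ℂ) ^ n * bF u)) * habd u
      | linear_combination ((-1 : ℂ) ^ n * (aF u + bF u)) * habd u
      | linear_combination (-((-1 : ℂ) ^ n * (aF u + bF u))) * habd u
      | linear_combination ((-1 : ℂ) ^ n * (aF u * bF u)) * habd u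
      | linear_combination (-((-1 : ℂ) ^ n * (aF u * bF u))) * habd u
      | linear_combination ((-1 : ℂ) ^ n * (-aF u ^ 2 + aF u * bF u + bF u ^ 2)) * habd u
      | linear_combination (-((-1 : ℂ) ^ n * (-aF u ^ 2 + aF u * bF u + bF u ^ 2))) * habd u
      | linear_combination ((-1 : ℂ) ^ n * (aF u ^ 2 + aF u * bF u - bF u ^ 2)) * habd u
      | linear_combination (-((-1 : ℂ) ^ n * (aF u ^ 2 + aF u * bF u - bF u ^ 2))) * habd u
  · -- relation Bop
    rw [Qop_succ n, Bop_succ (n + 1 + 1) u]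
    simp only [Matrix.mul_add, Matrix.add_mul, Matrix.mul_smul, Matrix.smul_mul, dT_mul_rT,
      mul_dT, vecMul_dl_Eop, rT_mul, Eop_mul, Matrix.one_mul, Matrix.mul_one, one_mul, mul_one,
      Bool.true_eq_false, Bool.false_eq_true, if_true, if_false, ite_true, ite_false, reduceIte,
      rT_zero_left, rT_zero_right, dT_zero_left, dT_zero_right, smul_zero, zero_smul,
      Matrix.mul_zero, Matrix.zero_mul, add_zero, zero_add, smul_smul,
      mulL_A (n + 1) u, mulL_B (n + 1) u, mulL_C (n + 1) u, mulL_D (n + 1) u,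
      mulR_A (n + 1) u, mulR_B (n + 1) u, mulR_C (n + 1) u, mulR_D (n + 1) u]
    simp only [ihA, ihB, ihC, ihD]
    simp only [Aop_succ (n + 1) u, Bop_succ (n + 1) u, Cop_succ (n + 1) u, Dop_succ (n + 1) u]
    simp only [Matrix.mul_add, Matrix.add_mul, Matrix.mul_smul, Matrix.smul_mul, rT_mul,
      Matrix.one_mul, Matrix.mul_one, one_mul, mul_one, Eop_mul,
      Bool.true_eq_false, Bool.false_eq_true, if_true, if_false, ite_true, ite_false, reduceIte,
      rT_zero_left, rT_zero_right, dT_zero_left, dT_zero_right, smul_zero, zero_smul,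
      Matrix.mul_zero, Matrix.zero_mul, add_zero, zero_add, smul_smul,
      rT_add_right, rT_smul_right, dT_add_right, dT_smul_right, rT_dT_swap, smul_add]
    all_goals rw [hd]
    all_goals match_scalars <;>
      first
      | ring1
      | linear_combination ((-1 : ℂ) ^ n * aF u) * habd u
      | linear_combination (-((-1 : ℂ) ^ n * aF u)) * habd u
      | linear_combination ((-1 : ℂ) ^ n * bF u) * habd u
      | linear_combination (-((-1 : ℂ) ^ n * bF u)) * habd u
      | linear_combination ((-1 : ℂ) ^ n * (aF u + bF u)) * habd u
      | linear_combination (-((-1 : ℂ) ^ n * (aF u + bF u))) * habd u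
      | linear_combination ((-1 : ℂ) ^ n * (aF u * bF u)) * habd u
      | linear_combination (-((-1 : ℂ) ^ n * (aF u * bF u))) * habd u
      | linear_combination ((-1 : ℂ) ^ n * (-aF u ^ 2 + aF u * bF u + bF u ^ 2)) * habd u
      | linear_combination (-((-1 : ℂ) ^ n * (-aF u ^ 2 + aF u * bF u + bF u ^ 2))) * habd u
      | linear_combination ((-1 : ℂ) ^ n * (aF u ^ 2 + aF u * bF u - bF u ^ 2)) * habd u
      | linear_combination (-((-1 : ℂ) ^ n * (aF u ^ 2 + aF u * bF u - bF u ^ 2))) * habd u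
  · -- relation Cop
    rw [Qop_succ n, Cop_succ (n + 1 + 1) u]
    simp only [Matrix.mul_add, Matrix.add_mul, Matrix.mul_smul, Matrix.smul_mul, dT_mul_rT,
      mul_dT, vecMul_dl_Eop, rT_mul, Eop_mul, Matrix.one_mul, Matrix.mul_one, one_mul, mul_one,
      Bool.true_eq_false, Bool.false_eq_true, if_true, if_false, ite_true, ite_false, reduceIte,
      rT_zero_left, rT_zero_right, dT_zero_left, dT_zero_right, smul_zero, zero_smul,
      Matrix.mul_zero, Matrix.zero_mul, add_zero, zero_add, smul_smul,
      mulL_A (n + 1) u, mulL_B (n + 1) u, mulL_C (n + 1) u, mulL_D (n + 1) u,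
      mulR_A (n + 1) u, mulR_B (n + 1) u, mulR_C (n + 1) u, mulR_D (n + 1) u]
    simp only [ihA, ihB, ihC, ihD]
    simp only [Aop_succ (n + 1) u, Bop_succ (n + 1) u, Cop_succ (n + 1) u, Dop_succ (n + 1) u]
    simp only [Matrix.mul_add, Matrix.add_mul, Matrix.mul_smul, Matrix.smul_mul, rT_mul,
      Matrix.one_mul, Matrix.mul_one, one_mul, mul_one, Eop_mul,
      Bool.true_eq_false, Bool.false_eq_true, if_true, if_false, ite_true, ite_false, reduceIte,
      rT_zero_left, rT_zero_right, dT_zero_left, dT_zero_right, smul_zero, zero_smul,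
      Matrix.mul_zero, Matrix.zero_mul, add_zero, zero_add, smul_smul,
      rT_add_right, rT_smul_right, dT_add_right, dT_smul_right, rT_dT_swap, smul_add]
    all_goals rw [hd]
    all_goals match_scalars <;>
      first
      | ring1
      | linear_combination ((-1 : ℂ) ^ n * aF u) * habd u
      | linear_combination (-((-1 : ℂ) ^ n * aF u)) * habd u
      | linear_combination ((-1 : ℂ) ^ n * bF u) * habd u
      | linear_combination (-((-1 : ℂ) ^ n * bF u)) * habd u
      | linear_combination ((-1 : ℂ) ^ n * (aF u + bF u)) * habd u
      | linear_combination (-((-1 : ℂ) ^ n * (aF u + bF u))) * habd u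
      | linear_combination ((-1 : ℂ) ^ n * (aF u * bF u)) * habd u
      | linear_combination (-((-1 : ℂ) ^ n * (aF u * bF u))) * habd u
      | linear_combination ((-1 : ℂ) ^ n * (-aF u ^ 2 + aF u * bF u + bF u ^ 2)) * habd u
      | linear_combination (-((-1 : ℂ) ^ n * (-aF u ^ 2 + aF u * bF u + bF u ^ 2))) * habd u
      | linear_combination ((-1 : ℂ) ^ n * (aF u ^ 2 + aF u * bF u - bF u ^ 2)) * habd u
      | linear_combination (-((-1 : ℂ) ^ n * (aF u ^ 2 + aF u * bF u - bF u ^ 2))) * habd u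
  · -- relation Dop
    rw [Qop_succ n, Dop_succ (n + 1 + 1) u]
    simp only [Matrix.mul_add, Matrix.add_mul, Matrix.mul_smul, Matrix.smul_mul, dT_mul_rT,
      mul_dT, vecMul_dl_Eop, rT_mul, Eop_mul, Matrix.one_mul, Matrix.mul_one, one_mul, mul_one,
      Bool.true_eq_false, Bool.false_eq_true, if_true, if_false, ite_true, ite_false, reduceIte,
      rT_zero_left, rT_zero_right, dT_zero_left, dT_zero_right, smul_zero, zero_smul,
      Matrix.mul_zero, Matrix.zero_mul, add_zero, zero_add, smul_smul,
      mulL_A (n + 1) u, mulL_B (n + 1) u, mulL_C (n + 1) u, mulL_D (n + 1) u,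
      mulR_A (n + 1) u, mulR_B (n + 1) u, mulR_C (n + 1) u, mulR_D (n + 1) u]
    simp only [ihA, ihB, ihC, ihD]
    simp only [Aop_succ (n + 1) u, Bop_succ (n + 1) u, Cop_succ (n + 1) u, Dop_succ (n + 1) u]
    simp only [Matrix.mul_add, Matrix.add_mul, Matrix.mul_smul, Matrix.smul_mul, rT_mul,
      Matrix.one_mul, Matrix.mul_one, one_mul, mul_one, Eop_mul,
      Bool.true_eq_false, Bool.false_eq_true, if_true, if_false, ite_true, ite_false, reduceIte,
      rT_zero_left, rT_zero_right, dT_zero_left, dT_zero_right, smul_zero, zero_smul,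
      Matrix.mul_zero, Matrix.zero_mul, add_zero, zero_add, smul_smul,
      rT_add_right, rT_smul_right, dT_add_right, dT_smul_right, rT_dT_swap, smul_add]
    all_goals rw [hd]
    all_goals match_scalars <;>
      first
      | ring1
      | linear_combination ((-1 : ℂ) ^ n * aF u) * habd u
      | linear_combination (-((-1 : ℂ) ^ n * aF u)) * habd u
      | linear_combination ((-1 : ℂ) ^ n * bF u) * habd u
      | linear_combination (-((-1 : ℂ) ^ n * bF u)) * habd u
      | linear_combination ((-1 : ℂ) ^ n * (aF u + bF u)) * habd u
      | linear_combination (-((-1 : ℂ) ^ n * (aF u + bF u))) * habd u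
      | linear_combination ((-1 : ℂ) ^ n * (aF u * bF u)) * habd u
      | linear_combination (-((-1 : ℂ) ^ n * (aF u * bF u))) * habd u
      | linear_combination ((-1 : ℂ) ^ n * (-aF u ^ 2 + aF u * bF u + bF u ^ 2)) * habd u
      | linear_combination (-((-1 : ℂ) ^ n * (-aF u ^ 2 + aF u * bF u + bF u ^ 2))) * habd u
      | linear_combination ((-1 : ℂ) ^ n * (aF u ^ 2 + aF u * bF u - bF u ^ 2)) * habd u
      | linear_combination (-((-1 : ℂ) ^ n * (aF u ^ 2 + aF u * bF u - bF u ^ 2))) * habd u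

end XXZ
namespace XXZ

lemma rel_all (n : ℕ) (u : ℂ) : Rel n u := by
  induction n with
  | zero => exact rel_zero u
  | succ n ih => exact rel_step n u ih

end XXZ

/-- Theorem 1, 𝒜-relation: for every `N = n+2 ≥ 2` and every `u ∈ ℂ`,
`Q^(N) ∘ 𝒜^(N)(u) - d(u)² 𝒜^(N-1)(u) ∘ Q^(N) = (-1)^N c(u) d(u) (E⁺ ⊗ ℬ^(N-1)(u))`
(`Qop n = Q^(n+2)`). -/
theorem QA_commutation (n : ℕ) (u : ℂ) :
    Qop n * Aop (n + 2) u - dF u ^ 2 • (Aop (n + 1) u * Qop n)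
      = ((-1 : ℂ) ^ (n + 2) * (cF u * dF u)) • Etens n true (Bop (n + 1) u) := by
  have h := (XXZ.rel_all n u).1
  have h2 : Qop n * Aop (n + 2) u = Qop n * Aop (n + 1 + 1) u := rfl
  have hE : Etens n true (Bop (n + 1) u) = XXZ.dT (XXZ.dl true) (Bop (n + 1) u) := rfl
  rw [h2, h, hE, show ((-1 : ℂ) ^ (n + 2) * (cF u * dF u)) = (-1 : ℂ) ^ n * dF u from by
    rw [show cF u = 1 from rfl]; ring]
  exact add_sub_cancel_left _ _
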